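/- Let 𝔘₁ be the poset with involution ({a < b}, θ = {(a,b)}) over an algebraically closed field k. Then every indecomposable representation of 𝔘₁ is isomorphic to one of: the trivial representation S = (k,0); L_{1,1} with L₀ = k⟨e⟩ and L_{(a,b)} = ⟨(0,e)⟩; L_{2,1} with L₀ = k⟨e⟩ and L_{(a,b)} = ⟨(0,e),(e,0)⟩; or L_{3,1} with L₀ = k⟨e₁,e₂⟩ and L_{(a,b)} = ⟨(0,e₁),(e₁,e₂)⟩. -/

import Mathlib

open scoped Classical

/-! ## Representations of the poset with involution `𝔘_n`
`𝔘_n` is the chain `a_n < ⋯ < a₁ < b₁ < ⋯ < b_n` with involution classes `z_i = (a_i, b_i)`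
(indexed here by `Fin n`, `i : Fin n` corresponding to the class `(a_{i+1}, b_{i+1})`).
A representation is a finite-dimensional space `V₀` together with subspaces
`W i ⊆ V₀ × V₀` (coordinates = values at `a_i` and `b_i`) subject to the conditions
coming from the order:  `a_i < a_j` iff `j < i`, `a_i < b_j` always, `b_i < b_j` iff
`i < j`. -/

structure RepU (k : Type) [Field k] (n : ℕ) where
  V0 : Type
  [acg : AddCommGroup V0]
  [mod : Module k V0]
  [fd : FiniteDimensional k V0]
  W : Fin n → Submodule k (V0 × V0)
  c1 : ∀ i j : Fin n, j < i → ∀ p ∈ W i, ((p.1, 0) : V0 × V0) ∈ W j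
  c2 : ∀ i j : Fin n, ∀ p ∈ W i, ((0, p.1) : V0 × V0) ∈ W j
  c3 : ∀ i j : Fin n, i < j → ∀ p ∈ W i, ((0, p.2) : V0 × V0) ∈ W j

attribute [instance] RepU.acg RepU.mod RepU.fd

variable {k : Type} [Field k] {n : ℕ}

/-- Morphisms of representations of `𝔘_n`. -/
@[ext]
structure HomU (V V' : RepU k n) where
  φ : V.V0 →ₗ[k] V'.V0
  maps : ∀ i : Fin n, ∀ p ∈ V.W i, ((φ p.1, φ p.2) : V'.V0 × V'.V0) ∈ V'.W i

namespace HomU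

def comp {U V W : RepU k n} (g : HomU V W) (f : HomU U V) : HomU U W :=
  ⟨g.φ ∘ₗ f.φ, fun i p hp => g.maps i _ (f.maps i p hp)⟩

def idH (V : RepU k n) : HomU V V := ⟨LinearMap.id, fun _ _ hp => hp⟩

def zeroH (V V' : RepU k n) : HomU V V' :=
  ⟨0, fun i _ _ => by simp; exact (V'.W i).zero_mem⟩

end HomU

/-- The trivial representation `S`. -/
def IsSU (V : RepU k n) : Prop :=
  Module.finrank k V.V0 = 1 ∧ ∀ j, V.W j = ⊥

/-- `V ≅ L_{1,i}`:  `V₀ = k⟨e⟩`, `W j = 0` for `j < i` and `W j = ⟨(0,e)⟩` for `j ≥ i`. -/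
def IsL1U (V : RepU k n) (i : Fin n) : Prop :=
  ∃ e : V.V0, e ≠ 0 ∧ Submodule.span k {e} = ⊤ ∧
    ∀ j, V.W j = if j < i then ⊥ else Submodule.span k {((0, e) : V.V0 × V.V0)}

/-- `V ≅ L_{2,i}`:  `V₀ = k⟨e⟩`, `W j = ⟨(0,e),(e,0)⟩` for `j ≤ i`, `⟨(0,e)⟩` for `j > i`. -/
def IsL2U (V : RepU k n) (i : Fin n) : Prop :=
  ∃ e : V.V0, e ≠ 0 ∧ Submodule.span k {e} = ⊤ ∧
    ∀ j, V.W j = if j ≤ i then Submodule.span k {((0, e) : V.V0 × V.V0), (e, 0)}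
      else Submodule.span k {((0, e) : V.V0 × V.V0)}

/-- `V ≅ L_{3,i}`:  `V₀ = k⟨e₁,e₂⟩`, `W j = ⟨(0,e₁),(e₁,0)⟩` for `j < i`,
`⟨(0,e₁),(e₁,e₂)⟩` for `j = i`, `⟨(0,e₁),(0,e₂)⟩` for `j > i`. -/
def IsL3U (V : RepU k n) (i : Fin n) : Prop :=
  ∃ e₁ e₂ : V.V0, LinearIndependent k ![e₁, e₂] ∧
    Submodule.span k {e₁, e₂} = ⊤ ∧
    ∀ j, V.W j =
      if j < i then Submodule.span k {((0, e₁) : V.V0 × V.V0), (e₁, 0)}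
      else if j = i then Submodule.span k {((0, e₁) : V.V0 × V.V0), (e₁, e₂)}
      else Submodule.span k {((0, e₁) : V.V0 × V.V0), (0, e₂)}

/-- `V` is indecomposable:  nonzero, and its only idempotent endomorphisms are `0` and the
identity. -/
def IndecU (V : RepU k n) : Prop :=
  (∃ v : V.V0, v ≠ 0) ∧
    ∀ f : HomU V V, HomU.comp f f = f → f = HomU.zeroH V V ∨ f = HomU.idH V

section
variable {M : Type} [AddCommGroup M] [Module k M]

lemma relcompl {p q : Submodule k M} (h : p ≤ q) :
    ∃ r : Submodule k M, r ≤ q ∧ Disjoint p r ∧ p ⊔ r = q := by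
  obtain ⟨r, hr⟩ := Submodule.exists_isCompl p
  refine ⟨r ⊓ q, inf_le_right, hr.disjoint.mono_right inf_le_left, ?_⟩
  rw [← sup_inf_assoc_of_le r h, hr.sup_eq_top, top_inf_eq]

noncomputable def projL {p q : Submodule k M} (h : IsCompl p q) : M →ₗ[k] M :=
  p.subtype ∘ₗ p.linearProjOfIsCompl q h

lemma projL_left {p q : Submodule k M} (h : IsCompl p q) {x : M} (hx : x ∈ p) :
    projL h x = x := by
  have h1 := Submodule.linearProjOfIsCompl_apply_left h ⟨x, hx⟩
  exact congrArg Subtype.val h1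

lemma projL_right {p q : Submodule k M} (h : IsCompl p q) {x : M} (hx : x ∈ q) :
    projL h x = 0 := by
  have h1 := Submodule.linearProjOfIsCompl_apply_right h ⟨x, hx⟩
  exact (congrArg Subtype.val h1).trans rfl

lemma projL_mem {p q : Submodule k M} (h : IsCompl p q) (x : M) : projL h x ∈ p :=
  SetLike.coe_mem _

lemma projL_proj {p q : Submodule k M} (h : IsCompl p q) (x : M) :
    projL h (projL h x) = projL h x := projL_left h (projL_mem h x)

lemma sub_projL_mem {p q : Submodule k M} (h : IsCompl p q) (x : M) :
    x - projL h.symm x ∈ p := by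
  have h2 := Submodule.projection_add_projection_eq_self h x
  have h3 : x - projL h.symm x = ((p.linearProjOfIsCompl q h) x : M) :=
    sub_eq_of_eq_add h2.symm
  rw [h3]; exact SetLike.coe_mem _

end

lemma dim_one (V : RepU k 1) (hV : IndecU V)
    (hW : ∀ (f : V.V0 →ₗ[k] V.V0), ∀ p ∈ V.W 0,
      ((f p.1, f p.2) : V.V0 × V.V0) ∈ V.W 0) :
    ∃ e : V.V0, e ≠ 0 ∧ Submodule.span k {e} = ⊤ := by
  obtain ⟨v, hv⟩ := hV.1
  obtain ⟨q, hq⟩ := Submodule.exists_isCompl (Submodule.span k {v})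
  set f := projL hq with hf
  have hmaps : ∀ i : Fin 1, ∀ p ∈ V.W i, ((f p.1, f p.2) : V.V0 × V.V0) ∈ V.W i := by
    intro i p hp
    have hi : i = 0 := Subsingleton.elim i 0
    subst hi
    exact hW f p hp
  set F : HomU V V := ⟨f, hmaps⟩ with hF
  have hidem : HomU.comp F F = F := by
    apply HomU.ext
    apply LinearMap.ext
    intro x
    exact projL_proj hq x
  have hvmem : v ∈ Submodule.span k {v} := Submodule.mem_span_singleton_self v
  rcases hV.2 F hidem with h | h
  · exfalso
    have h0 : f = 0 := congrArg HomU.φ h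
    have := projL_left hq hvmem
    rw [← hf, h0] at this
    exact hv (by simpa using this.symm)
  · have h0 : f = LinearMap.id := congrArg HomU.φ h
    have hqbot : q = ⊥ := by
      rw [eq_bot_iff]
      intro x hx
      have := projL_right hq hx
      rw [← hf, h0] at this
      simpa using this
    refine ⟨v, hv, ?_⟩
    have := hq.sup_eq_top
    rwa [hqbot, sup_bot_eq] at this


/-- Over an algebraically closed field `k`, every indecomposable
representation of `𝔘₁ = ({a < b}, θ = {(a,b)})` is isomorphic to one of:  the trivial
representation `S`, `L_{1,1}`, `L_{2,1}`, or `L_{3,1}`. -/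
theorem indecomposables_of_U1
    {k : Type} [Field k] [IsAlgClosed k] (V : RepU k 1) (hV : IndecU V) :
    IsSU V ∨ IsL1U V 0 ∨ IsL2U V 0 ∨ IsL3U V 0 := by
  classical
  -- basic objects
  have hc : ∀ p ∈ V.W 0, (((0 : V.V0), p.1) : V.V0 × V.V0) ∈ V.W 0 :=
    fun p hp => V.c2 0 0 p hp
  set B : Submodule k V.V0 := Submodule.comap (LinearMap.inr k V.V0 V.V0) (V.W 0) with hBdef
  have hB : ∀ x : V.V0, x ∈ B ↔ (((0 : V.V0), x) : V.V0 × V.V0) ∈ V.W 0 := by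
    intro x; rw [hBdef]; simp [Submodule.mem_comap]
  set F : (V.W 0) →ₗ[k] V.V0 := (LinearMap.fst k V.V0 V.V0) ∘ₗ (V.W 0).subtype with hFdef
  set A : Submodule k V.V0 := LinearMap.range F with hAdef
  have hmemA : ∀ x : V.V0, x ∈ A ↔ ∃ y, ((x, y) : V.V0 × V.V0) ∈ V.W 0 := by
    intro x
    constructor
    · rintro ⟨w, rfl⟩
      exact ⟨w.val.2, w.property⟩
    · rintro ⟨y, hy⟩
      exact ⟨⟨(x, y), hy⟩, rfl⟩
  have hAB : A ≤ B := by
    intro x hx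
    obtain ⟨y, hy⟩ := (hmemA x).1 hx
    exact (hB x).2 (hc (x, y) hy)
  obtain ⟨Dfull, hBD⟩ := Submodule.exists_isCompl B
  set pD : V.V0 →ₗ[k] V.V0 := projL hBD.symm with hpDdef
  have pD_mem : ∀ x, pD x ∈ Dfull := fun x => projL_mem hBD.symm x
  have pD_B : ∀ x ∈ B, pD x = 0 := fun x hx => projL_right hBD.symm hx
  have sub_pD_mem : ∀ x, x - pD x ∈ B := fun x => sub_projL_mem hBD x
  -- the map φA : A → V0
  set ψ : (V.W 0) →ₗ[k] V.V0 := pD ∘ₗ ((LinearMap.snd k V.V0 V.V0) ∘ₗ (V.W 0).subtype)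
    with hψdef
  have hkerψ : LinearMap.ker F ≤ LinearMap.ker ψ := by
    intro w hw
    rw [LinearMap.mem_ker] at hw ⊢
    have hw1 : w.val.1 = 0 := hw
    have hwv : w.val = ((0 : V.V0), w.val.2) := by
      rw [Prod.ext_iff]; exact ⟨hw1, rfl⟩
    have : w.val.2 ∈ B := (hB _).2 (by rw [← hwv]; exact w.property)
    exact pD_B _ this
  set φA : ↥A →ₗ[k] V.V0 :=
    ((LinearMap.ker F).liftQ ψ hkerψ) ∘ₗ (F.quotKerEquivRange.symm : ↥(LinearMap.range F) →ₗ[k] (V.W 0) ⧸ LinearMap.ker F) with hφAdef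
  have hP : ∀ (x y : V.V0) (hxy : ((x, y) : V.V0 × V.V0) ∈ V.W 0),
      φA ⟨x, (hmemA x).2 ⟨y, hxy⟩⟩ = pD y := by
    intro x y hxy
    set w : ↥(V.W 0) := ⟨(x, y), hxy⟩ with hwdef
    show ((LinearMap.ker F).liftQ ψ hkerψ)
        (F.quotKerEquivRange.symm ⟨F w, LinearMap.mem_range_self F w⟩) = pD y
    rw [LinearMap.quotKerEquivRange_symm_apply_image, Submodule.mkQ_apply,
      Submodule.liftQ_apply]
    rfl
  -- derived facts about φA
  have hφmemD : ∀ (x : V.V0) (hx : x ∈ A), φA ⟨x, hx⟩ ∈ Dfull := by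
    intro x hx
    obtain ⟨y, hy⟩ := (hmemA x).1 hx
    have h := hP x y hy
    rw [show (⟨x, (hmemA x).2 ⟨y, hy⟩⟩ : ↥A) = ⟨x, hx⟩ from rfl] at h
    rw [h]; exact pD_mem y
  have hgraph : ∀ (x : V.V0) (hx : x ∈ A), ((x, φA ⟨x, hx⟩) : V.V0 × V.V0) ∈ V.W 0 := by
    intro x hx
    obtain ⟨y, hy⟩ := (hmemA x).1 hx
    have h := hP x y hy
    rw [show (⟨x, (hmemA x).2 ⟨y, hy⟩⟩ : ↥A) = ⟨x, hx⟩ from rfl] at h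
    have h2 : ((x, φA ⟨x, hx⟩) : V.V0 × V.V0) = (x, y) - (0, y - pD y) := by
      rw [h, Prod.ext_iff]
      constructor
      · simp
      · simp
    rw [h2]
    exact Submodule.sub_mem _ hy ((hB _).1 (sub_pD_mem y))
  set A₀ : Submodule k V.V0 := Submodule.comap (LinearMap.inl k V.V0 V.V0) (V.W 0) with hA₀def
  have hA0 : ∀ x : V.V0, x ∈ A₀ ↔ ((x, (0 : V.V0)) : V.V0 × V.V0) ∈ V.W 0 := by
    intro x; rw [hA₀def]; simp [Submodule.mem_comap]
  have hA0A : A₀ ≤ A := fun x hx => (hmemA x).2 ⟨0, (hA0 x).1 hx⟩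
  have hφ0 : ∀ (x : V.V0) (hx : x ∈ A), φA ⟨x, hx⟩ = 0 → x ∈ A₀ := by
    intro x hx h0
    obtain ⟨y, hy⟩ := (hmemA x).1 hx
    have h := hP x y hy
    rw [show (⟨x, (hmemA x).2 ⟨y, hy⟩⟩ : ↥A) = ⟨x, hx⟩ from rfl] at h
    rw [h0] at h
    have hyB : y ∈ B := by
      have := sub_pD_mem y
      rwa [← h, sub_zero] at this
    have h2 : ((x, (0 : V.V0)) : V.V0 × V.V0) = (x, y) - (0, y) := by
      rw [Prod.ext_iff]; constructor <;> simp
    exact (hA0 x).2 (by rw [h2]; exact Submodule.sub_mem _ hy ((hB y).1 hyB))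
  have hφ0' : ∀ (x : V.V0) (hx : x ∈ A), x ∈ A₀ → φA ⟨x, hx⟩ = 0 := by
    intro x hx h0
    have h := hP x 0 ((hA0 x).1 h0)
    rw [show (⟨x, (hmemA x).2 ⟨0, (hA0 x).1 h0⟩⟩ : ↥A) = ⟨x, hx⟩ from rfl] at h
    rw [h, map_zero]
  -- Step I : relative complement C of A in B
  obtain ⟨C, hCB, hdAC, hACB⟩ := relcompl hAB
  have hcC : IsCompl C (A ⊔ Dfull) := by
    constructor
    · have h1 : C ⊓ (A ⊔ Dfull) ≤ A := by
        calc C ⊓ (A ⊔ Dfull) ≤ (A ⊔ Dfull) ⊓ B := le_inf inf_le_right (le_trans inf_le_left hCB)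
        _ = A ⊔ (Dfull ⊓ B) := sup_inf_assoc_of_le Dfull hAB
        _ = A := by rw [disjoint_iff.1 hBD.disjoint.symm, sup_bot_eq]
      rw [disjoint_iff]
      exact le_antisymm (le_trans (le_inf inf_le_left h1) hdAC.symm.le_bot) bot_le
    · rw [codisjoint_iff, ← sup_assoc, sup_comm C A, hACB, hBD.sup_eq_top]
  set pC : V.V0 →ₗ[k] V.V0 := projL hcC with hpCdef
  have hmapsC : ∀ i : Fin 1, ∀ p ∈ V.W i, ((pC p.1, pC p.2) : V.V0 × V.V0) ∈ V.W i := by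
    intro i p hp
    have hi : i = 0 := Subsingleton.elim i 0
    subst hi
    have hp1A : p.1 ∈ A := (hmemA p.1).2 ⟨p.2, hp⟩
    have hx : pC p.1 = 0 := projL_right hcC (Submodule.mem_sup_left hp1A)
    have hb : p.2 - pD p.2 ∈ A ⊔ C := by rw [hACB]; exact sub_pD_mem p.2
    obtain ⟨a, ha, c, hcc, hac⟩ := Submodule.mem_sup.1 hb
    have hsplit : p.2 = a + c + pD p.2 := (sub_eq_iff_eq_add.1 hac.symm)
    have h2 : pC p.2 = c := by
      rw [hsplit, map_add, map_add, projL_right hcC (Submodule.mem_sup_left ha),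
        projL_left hcC hcc, projL_right hcC (Submodule.mem_sup_right (pD_mem p.2))]
      simp
    rw [hx, h2]
    exact (hB c).1 (hCB hcc)
  set FC : HomU V V := ⟨pC, hmapsC⟩ with hFCdef
  have hidemC : HomU.comp FC FC = FC := by
    apply HomU.ext; apply LinearMap.ext; intro x; exact projL_proj hcC x
  rcases hV.2 FC hidemC with hzC | hiC
  case inr =>
    -- pC = id : the L1 case
    have h0 : pC = LinearMap.id := congrArg HomU.φ hiC
    have hAD : A ⊔ Dfull = ⊥ := by
      rw [eq_bot_iff]; intro x hx
      have := projL_right hcC hx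
      rw [← hpCdef, h0] at this
      simpa using this
    have hAbot : A = ⊥ := by
      rw [eq_bot_iff]; exact le_trans le_sup_left hAD.le
    have hDbot : Dfull = ⊥ := by
      rw [eq_bot_iff]; exact le_trans le_sup_right hAD.le
    have hBtop : B = ⊤ := by
      have := hBD.sup_eq_top; rwa [hDbot, sup_bot_eq] at this
    have hWchar : ∀ p : V.V0 × V.V0, p ∈ V.W 0 ↔ p.1 = 0 := by
      intro p
      constructor
      · intro hp
        have : p.1 ∈ A := (hmemA p.1).2 ⟨p.2, hp⟩
        rw [hAbot] at this; simpa using this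
      · intro h1
        have h2 : p.2 ∈ B := by rw [hBtop]; trivial
        have h3 := (hB p.2).1 h2
        have : p = ((0 : V.V0), p.2) := by rw [Prod.ext_iff]; exact ⟨h1, rfl⟩
        rwa [this]
    obtain ⟨e, he0, hsp⟩ := dim_one V hV (by
      intro f p hp
      rw [hWchar] at hp
      exact (hWchar _).2 (by simp [hp]))
    refine Or.inr (Or.inl ⟨e, he0, hsp, ?_⟩)
    intro j
    rw [if_neg (by omega)]
    apply le_antisymm
    · rintro ⟨x, y⟩ hp
      have hj : j = 0 := Subsingleton.elim j 0
      rw [hj] at hp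
      have h1 := (hWchar (x, y)).1 hp
      have h2 : y ∈ Submodule.span k {e} := hsp ▸ Submodule.mem_top
      obtain ⟨c, hcp⟩ := Submodule.mem_span_singleton.1 h2
      refine Submodule.mem_span_singleton.2 ⟨c, ?_⟩
      rw [Prod.smul_mk, smul_zero, Prod.ext_iff]
      exact ⟨h1.symm, hcp⟩
    · rw [Submodule.span_le, Set.singleton_subset_iff]
      have hj : j = 0 := Subsingleton.elim j 0
      rw [hj]
      exact (hWchar _).2 rfl
  case inl =>
    -- pC = 0, so C = ⊥ and B = A
    have h0 : pC = 0 := congrArg HomU.φ hzC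
    have hCbot : C = ⊥ := by
      rw [eq_bot_iff]; intro x hx
      have := projL_left hcC hx
      rw [← hpCdef, h0] at this
      simpa using this.symm
    have hBA : B = A := by rw [← hACB, hCbot, sup_bot_eq]
    -- Step II : relative complement A₁ of A₀ in A
    obtain ⟨A₁, hA1A, hd01, hs01⟩ := relcompl hA0A
    have hc0 : IsCompl A₀ (A₁ ⊔ Dfull) := by
      constructor
      · have h1 : A₀ ⊓ (A₁ ⊔ Dfull) ≤ A₁ := by
          calc A₀ ⊓ (A₁ ⊔ Dfull) ≤ (A₁ ⊔ Dfull) ⊓ A := le_inf inf_le_right (le_trans inf_le_left hA0A)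
          _ = A₁ ⊔ (Dfull ⊓ A) := sup_inf_assoc_of_le Dfull hA1A
          _ = A₁ := by rw [← hBA, disjoint_iff.1 hBD.disjoint.symm, sup_bot_eq]
        rw [disjoint_iff]
        exact le_antisymm (le_trans (le_inf inf_le_left h1) hd01.le_bot) bot_le
      · rw [codisjoint_iff, ← sup_assoc, hs01, ← hBA, hBD.sup_eq_top]
    set p0 : V.V0 →ₗ[k] V.V0 := projL hc0 with hp0def
    have hmaps0 : ∀ i : Fin 1, ∀ p ∈ V.W i, ((p0 p.1, p0 p.2) : V.V0 × V.V0) ∈ V.W i := by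
      intro i p hp
      have hi : i = 0 := Subsingleton.elim i 0
      subst hi
      have hp1A : p.1 ∈ A₀ ⊔ A₁ := by rw [hs01]; exact (hmemA p.1).2 ⟨p.2, hp⟩
      obtain ⟨x₀, hx₀, x₁, hx₁, hxx⟩ := Submodule.mem_sup.1 hp1A
      have h1 : p0 p.1 = x₀ := by
        rw [← hxx, map_add, projL_left hc0 hx₀,
          projL_right hc0 (Submodule.mem_sup_left hx₁)]
        simp
      have hb : p.2 - pD p.2 ∈ A₀ ⊔ A₁ := by rw [hs01, ← hBA]; exact sub_pD_mem p.2
      obtain ⟨b₀, hb₀, b₁, hb₁, hbb⟩ := Submodule.mem_sup.1 hb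
      have hsplit : p.2 = b₀ + b₁ + pD p.2 := (sub_eq_iff_eq_add.1 hbb.symm)
      have h2 : p0 p.2 = b₀ := by
        rw [hsplit, map_add, map_add, projL_left hc0 hb₀,
          projL_right hc0 (Submodule.mem_sup_left hb₁),
          projL_right hc0 (Submodule.mem_sup_right (pD_mem p.2))]
        simp
      rw [h1, h2]
      have h3 : ((x₀, b₀) : V.V0 × V.V0) = (x₀, 0) + (0, b₀) := by simp
      rw [h3]
      refine Submodule.add_mem _ ((hA0 x₀).1 hx₀) ((hB b₀).1 ?_)
      rw [hBA]; exact hA0A hb₀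
    set F0 : HomU V V := ⟨p0, hmaps0⟩ with hF0def
    have hidem0 : HomU.comp F0 F0 = F0 := by
      apply HomU.ext; apply LinearMap.ext; intro x; exact projL_proj hc0 x
    rcases hV.2 F0 hidem0 with hz0 | hi0
    case inr =>
      -- p0 = id : the L2 case
      have h0 : p0 = LinearMap.id := congrArg HomU.φ hi0
      have hAD : A₁ ⊔ Dfull = ⊥ := by
        rw [eq_bot_iff]; intro x hx
        have := projL_right hc0 hx
        rw [← hp0def, h0] at this
        simpa using this
      have hDbot : Dfull = ⊥ := by
        rw [eq_bot_iff]; exact le_trans le_sup_right hAD.le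
      have hA1bot : A₁ = ⊥ := by
        rw [eq_bot_iff]; exact le_trans le_sup_left hAD.le
      have hBtop : B = ⊤ := by
        have := hBD.sup_eq_top; rwa [hDbot, sup_bot_eq] at this
      have hA0top : A₀ = ⊤ := by
        rw [← hs01, hA1bot, sup_bot_eq] at hBA
        rw [← hBA, hBtop]
      have hW : V.W 0 = ⊤ := by
        rw [eq_top_iff]
        rintro ⟨x, y⟩ _
        have h1 : ((x, (0:V.V0)) : V.V0 × V.V0) ∈ V.W 0 := (hA0 x).1 (by rw [hA0top]; trivial)
        have h2 : (((0:V.V0), y) : V.V0 × V.V0) ∈ V.W 0 := (hB y).1 (by rw [hBtop]; trivial)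
        have h3 : ((x, y) : V.V0 × V.V0) = (x, 0) + (0, y) := by simp
        rw [h3]; exact Submodule.add_mem _ h1 h2
      obtain ⟨e, he0, hsp⟩ := dim_one V hV (by intro f p hp; rw [hW]; trivial)
      refine Or.inr (Or.inr (Or.inl ⟨e, he0, hsp, ?_⟩))
      intro j
      have hj : j = 0 := Subsingleton.elim j 0
      subst hj
      rw [if_pos (le_refl _), hW]
      apply le_antisymm _ le_top
      rintro ⟨x, y⟩ -
      have hx : x ∈ Submodule.span k {e} := hsp ▸ Submodule.mem_top
      have hy : y ∈ Submodule.span k {e} := hsp ▸ Submodule.mem_top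
      obtain ⟨a, ha⟩ := Submodule.mem_span_singleton.1 hx
      obtain ⟨b, hbb⟩ := Submodule.mem_span_singleton.1 hy
      refine Submodule.mem_span_pair.2 ⟨b, a, ?_⟩
      rw [Prod.smul_mk, Prod.smul_mk, Prod.mk_add_mk, smul_zero, smul_zero,
        add_zero, zero_add, Prod.ext_iff]
      exact ⟨ha, hbb⟩
    case inl =>
      -- p0 = 0 : A₀ = ⊥
      have h0 : p0 = 0 := congrArg HomU.φ hz0
      have hA0bot : A₀ = ⊥ := by
        rw [eq_bot_iff]; intro x hx
        have := projL_left hc0 hx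
        rw [← hp0def, h0] at this
        simpa using this.symm
      -- Step III
      set D₀ : Submodule k V.V0 := LinearMap.range φA with hD₀def
      have hD₀D : D₀ ≤ Dfull := by
        rintro x ⟨a, rfl⟩
        exact hφmemD a.1 a.2
      obtain ⟨D₁, hD1D, hdD, hsD⟩ := relcompl hD₀D
      have hdisjAD : Disjoint A Dfull := by rw [← hBA]; exact hBD.disjoint
      have hc3 : IsCompl (A ⊔ D₀) D₁ := by
        constructor
        · have h1 : (A ⊔ D₀) ⊓ D₁ ≤ D₀ := by
            calc (A ⊔ D₀) ⊓ D₁ ≤ (D₀ ⊔ A) ⊓ Dfull :=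
              le_inf (le_trans inf_le_left (sup_comm A D₀).le) (le_trans inf_le_right hD1D)
            _ = D₀ ⊔ (A ⊓ Dfull) := sup_inf_assoc_of_le A hD₀D
            _ = D₀ := by rw [disjoint_iff.1 hdisjAD, sup_bot_eq]
          rw [disjoint_iff]
          exact le_antisymm (le_trans (le_inf h1 inf_le_right) hdD.le_bot) bot_le
        · rw [codisjoint_iff, sup_assoc, hsD, ← hBA, hBD.sup_eq_top]
      set p3 : V.V0 →ₗ[k] V.V0 := projL hc3 with hp3def
      have hmaps3 : ∀ i : Fin 1, ∀ p ∈ V.W i, ((p3 p.1, p3 p.2) : V.V0 × V.V0) ∈ V.W i := by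
        intro i p hp
        have hi : i = 0 := Subsingleton.elim i 0
        subst hi
        have hp1A : p.1 ∈ A := (hmemA p.1).2 ⟨p.2, hp⟩
        have hx : p.1 ∈ A ⊔ D₀ := Submodule.mem_sup_left hp1A
        have hyA : p.2 - pD p.2 ∈ A := by rw [← hBA]; exact sub_pD_mem p.2
        have hyD : pD p.2 ∈ D₀ := by
          have h := hP p.1 p.2 hp
          rw [← h]
          exact LinearMap.mem_range_self φA _
        have hy : p.2 ∈ A ⊔ D₀ := by
          have h4 : p.2 = (p.2 - pD p.2) + pD p.2 := (sub_add_cancel p.2 (pD p.2)).symm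
          rw [h4]
          exact Submodule.add_mem _ (Submodule.mem_sup_left hyA) (Submodule.mem_sup_right hyD)
        rw [projL_left hc3 hx, projL_left hc3 hy]
        exact hp
      set F3 : HomU V V := ⟨p3, hmaps3⟩ with hF3def
      have hidem3 : HomU.comp F3 F3 = F3 := by
        apply HomU.ext; apply LinearMap.ext; intro x; exact projL_proj hc3 x
      rcases hV.2 F3 hidem3 with hz3 | hi3
      case inl =>
        -- p3 = 0 : the S case
        have h0 : p3 = 0 := congrArg HomU.φ hz3
        have hADbot : A ⊔ D₀ = ⊥ := by
          rw [eq_bot_iff]; intro x hx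
          have := projL_left hc3 hx
          rw [← hp3def, h0] at this
          simpa using this.symm
        have hAbot : A = ⊥ := by rw [eq_bot_iff]; exact le_trans le_sup_left hADbot.le
        have hW : V.W 0 = ⊥ := by
          rw [eq_bot_iff]
          rintro ⟨x, y⟩ hp
          have hxA : x ∈ A := (hmemA x).2 ⟨y, hp⟩
          have hx0 : x = 0 := by rw [hAbot] at hxA; simpa using hxA
          have hyB : y ∈ B := by
            refine (hB y).2 ?_
            rwa [hx0] at hp
          have hy0 : y = 0 := by rw [hBA, hAbot] at hyB; simpa using hyB
          rw [Submodule.mem_bot, Prod.ext_iff]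
          exact ⟨hx0, hy0⟩
        obtain ⟨e, he0, hsp⟩ := dim_one V hV (by
          intro f p hp
          rw [hW] at hp ⊢
          have : p = 0 := by simpa using hp
          rw [this]
          simp)
        refine Or.inl ⟨(finrank_eq_one_iff_of_nonzero e he0).2 hsp, fun j => ?_⟩
        have hj : j = 0 := Subsingleton.elim j 0
        rw [hj, hW]
      case inr =>
        -- p3 = id : the L3 case
        have h0 : p3 = LinearMap.id := congrArg HomU.φ hi3
        have hD1bot : D₁ = ⊥ := by
          rw [eq_bot_iff]; intro x hx
          have := projL_right hc3 hx
          rw [← hp3def, h0] at this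
          simpa using this
        have hADtop : A ⊔ D₀ = ⊤ := by
          have := hc3.sup_eq_top
          rwa [hD1bot, sup_bot_eq] at this
        have hdisjAD₀ : Disjoint A D₀ := hdisjAD.mono_right hD₀D
        have hφinj : ∀ (x : V.V0) (hx : x ∈ A), φA ⟨x, hx⟩ = 0 → x = 0 := by
          intro x hx h
          have := hφ0 x hx h
          rw [hA0bot] at this
          simpa using this
        have hAne : A ≠ ⊥ := by
          intro hA
          obtain ⟨v, hv⟩ := hV.1
          have hD0bot : D₀ = ⊥ := by
            rw [eq_bot_iff]
            rintro x ⟨a, rfl⟩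
            have ha0 : a = 0 :=
              Subtype.ext ((Submodule.eq_bot_iff A).1 hA a.1 a.2)
            rw [ha0, map_zero]
            simp
          rw [hA, hD0bot, sup_bot_eq] at hADtop
          exact hv (by rw [← Submodule.mem_bot (R := k), hADtop]; trivial)
        obtain ⟨u, huA, hu0⟩ := (Submodule.ne_bot_iff A).1 hAne
        have hcAD : IsCompl A D₀ := ⟨hdisjAD₀, codisjoint_iff.2 hADtop⟩
        set Φ : V.V0 →ₗ[k] V.V0 := φA ∘ₗ A.linearProjOfIsCompl D₀ hcAD with hΦdef
        have hΦA : ∀ (x : V.V0) (hx : x ∈ A), Φ x = φA ⟨x, hx⟩ := by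
          intro x hx
          exact congrArg φA (Submodule.linearProjOfIsCompl_apply_left hcAD ⟨x, hx⟩)
        have hΦgr : ∀ x ∈ A, ((x, Φ x) : V.V0 × V.V0) ∈ V.W 0 := by
          intro x hx
          rw [hΦA x hx]
          exact hgraph x hx
        have hΦD : ∀ x, Φ x ∈ D₀ := fun x => LinearMap.mem_range_self φA _
        have hΦinj : ∀ x ∈ A, Φ x = 0 → x = 0 := by
          intro x hx h
          exact hφinj x hx (by rw [← hΦA x hx]; exact h)
        have hmapA : Submodule.map Φ A = D₀ := by
          apply le_antisymm
          · rintro _ ⟨x, hx, rfl⟩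
            exact hΦD x
          · rintro _ ⟨a, rfl⟩
            exact ⟨a.1, a.2, hΦA a.1 a.2⟩
        set L : Submodule k V.V0 := Submodule.span k {u} with hLdef
        have hLA : L ≤ A := by
          rw [hLdef, Submodule.span_le, Set.singleton_subset_iff]; exact huA
        obtain ⟨L', hL'A, hdLL, hsLL⟩ := relcompl hLA
        have hL' : L' = ⊥ := by
          by_contra hne
          obtain ⟨u', hu'L, hu'0⟩ := (Submodule.ne_bot_iff L').1 hne
          set ML : Submodule k V.V0 := Submodule.map Φ L with hMLdef
          set ML' : Submodule k V.V0 := Submodule.map Φ L' with hML'def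
          have hcL : IsCompl (L ⊔ ML) (L' ⊔ ML') := by
            constructor
            · rw [Submodule.disjoint_def]
              intro v hv hv'
              obtain ⟨l, hl, w1, hw1, hsum⟩ := Submodule.mem_sup.1 hv
              obtain ⟨l₂, hl₂, rfl⟩ := hw1
              obtain ⟨l', hl', w2, hw2, hsum'⟩ := Submodule.mem_sup.1 hv'
              obtain ⟨l₂', hl₂', rfl⟩ := hw2
              have h12 : l + Φ l₂ = l' + Φ l₂' := hsum.trans hsum'.symm
              have key : l - l' = Φ l₂' - Φ l₂ := by
                rw [sub_eq_sub_iff_add_eq_add, h12, add_comm]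
              have hmem1 : l - l' ∈ A := Submodule.sub_mem _ (hLA hl) (hL'A hl')
              have hmem2 : l - l' ∈ D₀ := by
                rw [key]; exact Submodule.sub_mem _ (hΦD l₂') (hΦD l₂)
              have h0' : l - l' = 0 := Submodule.disjoint_def.1 hdisjAD₀ _ hmem1 hmem2
              have hll' : l = l' := sub_eq_zero.1 h0'
              have hl0 : l = 0 :=
                Submodule.disjoint_def.1 hdLL l hl (hll' ▸ hl')
              have hΦeq : Φ l₂ = Φ l₂' := by
                have := h12
                rw [hll'] at this
                exact add_left_cancel this
              have hl₂eq : l₂ - l₂' = 0 := by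
                refine hΦinj _ (Submodule.sub_mem _ (hLA hl₂) (hL'A hl₂')) ?_
                rw [map_sub, hΦeq, sub_self]
              have hl₂0 : l₂ = 0 :=
                Submodule.disjoint_def.1 hdLL l₂ hl₂ ((sub_eq_zero.1 hl₂eq) ▸ hl₂')
              rw [← hsum, hl0, hl₂0, map_zero, add_zero]
            · rw [codisjoint_iff, sup_sup_sup_comm, hsLL, ← Submodule.map_sup, hsLL,
                hmapA, hADtop]
          set fL : V.V0 →ₗ[k] V.V0 := projL hcL with hfLdef
          have hmapsL : ∀ i : Fin 1, ∀ p ∈ V.W i,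
              ((fL p.1, fL p.2) : V.V0 × V.V0) ∈ V.W i := by
            intro i p hp
            have hi : i = 0 := Subsingleton.elim i 0
            subst hi
            have hp1A : p.1 ∈ L ⊔ L' := by rw [hsLL]; exact (hmemA p.1).2 ⟨p.2, hp⟩
            obtain ⟨l, hl, l', hl', hx⟩ := Submodule.mem_sup.1 hp1A
            have hfx : fL p.1 = l := by
              rw [← hx, map_add, projL_left hcL (Submodule.mem_sup_left hl),
                projL_right hcL (Submodule.mem_sup_left hl')]
              simp
            have hbA : p.2 - pD p.2 ∈ L ⊔ L' := by
              rw [hsLL, ← hBA]; exact sub_pD_mem p.2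
            obtain ⟨m, hm, m', hm', hbsum⟩ := Submodule.mem_sup.1 hbA
            have hpd : pD p.2 = Φ p.1 := by
              have hA' : p.1 ∈ A := (hmemA p.1).2 ⟨p.2, hp⟩
              rw [hΦA p.1 hA']
              exact (hP p.1 p.2 hp).symm
            have hΦx : Φ p.1 = Φ l + Φ l' := by rw [← hx, map_add]
            have hy : p.2 = m + m' + (Φ l + Φ l') := by
              rw [← hΦx, ← hpd]
              exact sub_eq_iff_eq_add.1 hbsum.symm
            have hfy : fL p.2 = m + Φ l := by
              rw [hy, map_add, map_add, map_add,
                projL_left hcL (Submodule.mem_sup_left hm),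
                projL_right hcL (Submodule.mem_sup_left hm'),
                projL_left hcL (Submodule.mem_sup_right ⟨l, hl, rfl⟩),
                projL_right hcL (Submodule.mem_sup_right ⟨l', hl', rfl⟩)]
              simp
            rw [hfx, hfy]
            have hsplit : ((l, m + Φ l) : V.V0 × V.V0) = (0, m) + (l, Φ l) := by
              rw [Prod.mk_add_mk, zero_add]
            rw [hsplit]
            refine Submodule.add_mem _ ((hB m).1 ?_) (hΦgr l (hLA hl))
            rw [hBA]; exact hLA hm
          set FL : HomU V V := ⟨fL, hmapsL⟩ with hFLdef
          have hidemL : HomU.comp FL FL = FL := by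
            apply HomU.ext; apply LinearMap.ext; intro x; exact projL_proj hcL x
          rcases hV.2 FL hidemL with hzL | hiL
          · have h0' : fL = 0 := congrArg HomU.φ hzL
            have := projL_left hcL (Submodule.mem_sup_left
              (Submodule.mem_span_singleton_self u) : u ∈ L ⊔ ML)
            rw [← hfLdef, h0'] at this
            exact hu0 (by simpa using this.symm)
          · have h0' : fL = LinearMap.id := congrArg HomU.φ hiL
            have := projL_right hcL (Submodule.mem_sup_left hu'L : u' ∈ L' ⊔ ML')
            rw [← hfLdef, h0'] at this
            exact hu'0 (by simpa using this)
        have hAL : A = Submodule.span k {u} := by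
          rw [← hLdef, ← hsLL, hL', sup_bot_eq]
        have hΦu0 : Φ u ≠ 0 := fun h => hu0 (hΦinj u huA h)
        refine Or.inr (Or.inr (Or.inr ⟨u, Φ u, ?_, ?_, ?_⟩))
        · rw [LinearIndependent.pair_iff]
          intro s t hst
          have h1 : s • u ∈ A := Submodule.smul_mem _ _ huA
          have h2 : s • u ∈ D₀ := by
            have : s • u = -(t • Φ u) := by
              rw [eq_neg_iff_add_eq_zero]; exact hst
            rw [this]
            exact Submodule.neg_mem _ (Submodule.smul_mem _ _ (hΦD u))
          have h3 : s • u = 0 := Submodule.disjoint_def.1 hdisjAD₀ _ h1 h2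
          have hs : s = 0 := by
            rcases smul_eq_zero.1 h3 with h | h
            · exact h
            · exact absurd h hu0
          refine ⟨hs, ?_⟩
          rw [hs, zero_smul, zero_add] at hst
          rcases smul_eq_zero.1 hst with h | h
          · exact h
          · exact absurd h hΦu0
        · rw [Submodule.span_insert, ← hAL]
          have hsp2 : Submodule.span k {Φ u} = D₀ := by
            rw [← hmapA, hAL, Submodule.map_span, Set.image_singleton]
          rw [hsp2]
          exact hADtop
        · intro j
          have hj : j = 0 := Subsingleton.elim j 0
          subst hj
          rw [if_neg (lt_irrefl _), if_pos rfl]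
          apply le_antisymm
          · rintro ⟨x, y⟩ hp
            have hxA : x ∈ A := (hmemA x).2 ⟨y, hp⟩
            obtain ⟨s, hs⟩ := Submodule.mem_span_singleton.1 (hAL ▸ hxA)
            have hpd : pD y = Φ x := by
              rw [hΦA x hxA]
              exact (hP x y hp).symm
            have hyb : y - pD y ∈ Submodule.span k {u} := by
              rw [← hAL, ← hBA]; exact sub_pD_mem y
            obtain ⟨t, ht⟩ := Submodule.mem_span_singleton.1 hyb
            refine Submodule.mem_span_pair.2 ⟨t, s, ?_⟩
            rw [Prod.smul_mk, Prod.smul_mk, Prod.mk_add_mk, smul_zero, zero_add,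
              Prod.ext_iff]
            refine ⟨hs, ?_⟩
            have : s • Φ u = pD y := by
              rw [hpd, ← hs, map_smul]
            rw [this, ht]
            exact sub_add_cancel y (pD y)
          · rw [Submodule.span_le]
            rintro p hp
            simp only [Set.mem_insert_iff, Set.mem_singleton_iff] at hp
            rcases hp with rfl | rfl
            · refine (hB u).1 ?_
              rw [hBA]; exact huA
            · exact hΦgr u huA
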